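/- (Integral representation of the inverse matrix square root.) Let P ∈ ℝ^{d×d} be symmetric positive definite. Then the Bochner integral ∫_{(0,∞)} t^{−1/2} exp(−tP) dt converges and equals √π times the positive semidefinite square root of P⁻¹: ∫₀^∞ t^{−1/2} exp(−tP) dt = √π · (P⁻¹)^{1/2}. -/

import Mathlib

open Matrix MeasureTheory
open scoped Matrix.Norms.L2Operator NNReal RealInnerProductSpace

/-- The ensemble mean `x̄ = (1/M) ∑ᵢ X⁽ⁱ⁾`. -/
noncomputable def ensMean {d M : ℕ} (X : Fin M → EuclideanSpace ℝ (Fin d)) :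
    EuclideanSpace ℝ (Fin d) :=
  (M : ℝ)⁻¹ • ∑ i, X i

/-- The matrix of ensemble deviations, with columns `X⁽ⁱ⁾ − x̄`. -/
noncomputable def devMat {d M : ℕ} (X : Fin M → EuclideanSpace ℝ (Fin d)) :
    Matrix (Fin d) (Fin M) ℝ :=
  Matrix.of fun j i => (X i - ensMean X) j

/-- The trace of the empirical covariance matrix,
`tr(P) = (1/(M−1)) ∑ᵢ ‖X⁽ⁱ⁾ − x̄‖²`. -/
noncomputable def trP {d M : ℕ} (X : Fin M → EuclideanSpace ℝ (Fin d)) : ℝ :=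
  ((M : ℝ) - 1)⁻¹ * ∑ i, ‖X i - ensMean X‖ ^ 2

open scoped ComplexOrder in
/-- The positive semidefinite square root of a positive semidefinite matrix
(the Mathlib definition of December 2024, since removed from Mathlib). -/
noncomputable def Matrix.PosSemidef.sqrt {n : Type*} [Fintype n] [DecidableEq n] {𝕜 : Type*}
    [RCLike 𝕜] {A : Matrix n n 𝕜} (hA : A.PosSemidef) : Matrix n n 𝕜 :=
  (hA.1.eigenvectorUnitary : Matrix n n 𝕜) *
    diagonal (fun i => ((Real.sqrt (hA.1.eigenvalues i) : ℝ) : 𝕜)) *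
    (star hA.1.eigenvectorUnitary : Matrix n n 𝕜)

open scoped MatrixOrder in
theorem psdSqrt_unique_aux {d : ℕ} {A S : Matrix (Fin d) (Fin d) ℝ} (hA : A.PosSemidef)
    (hS : S.PosSemidef) (h : S * S = A) : hA.sqrt = S := by
  have e1 : hA.sqrt = cfc Real.sqrt A := by
    rw [hA.1.cfc_eq]
    simp [Matrix.PosSemidef.sqrt, Matrix.IsHermitian.cfc, Function.comp_def, Unitary.conjStarAlgAut_apply]
  rw [e1, ← cfcₙ_eq_cfc, ← CFC.sqrt_eq_real_sqrt A hA.nonneg]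
  exact CFC.sqrt_unique h hS.nonneg

/-- integral representation of the inverse matrix square root:
for `P` symmetric positive definite, `∫₀^∞ t^{−1/2} exp(−tP) dt` converges (as a Bochner
integral) and equals `√π · (P⁻¹)^{1/2}`. -/
theorem integral_rpow_neg_half_exp_eq_sqrt_pi_smul_sqrt_inv {d : ℕ}
    (P : Matrix (Fin d) (Fin d) ℝ) (hP : P.PosDef) :
    IntegrableOn (fun t : ℝ => (Real.sqrt t)⁻¹ • NormedSpace.exp (-(t • P)))
      (Set.Ioi 0) volume ∧
    ∫ t in Set.Ioi (0 : ℝ), (Real.sqrt t)⁻¹ • NormedSpace.exp (-(t • P)) =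
      Real.sqrt Real.pi • hP.inv.posSemidef.sqrt := by
  classical
  have hH : P.IsHermitian := hP.1
  set U : Matrix (Fin d) (Fin d) ℝ := (hH.eigenvectorUnitary : Matrix (Fin d) (Fin d) ℝ) with hUdef
  set lam : Fin d → ℝ := hH.eigenvalues with hlamdef
  have hlam : ∀ i, 0 < lam i := fun i => hP.eigenvalues_pos i
  have hUstar : star U * U = 1 := Unitary.coe_star_mul_self hH.eigenvectorUnitary
  have hUstar' : U * star U = 1 := Unitary.coe_mul_star_self hH.eigenvectorUnitary
  have hUinv : U⁻¹ = star U := Matrix.inv_eq_left_inv hUstar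
  have hspec : P = U * diagonal lam * star U := by
    simpa using hH.spectral_theorem
  set E : Fin d → Matrix (Fin d) (Fin d) ℝ :=
    fun i => U * diagonal (Pi.single i 1) * star U with hE
  -- exp of conjugated diagonal
  have hexp : ∀ t : ℝ, NormedSpace.exp (-(t • P)) =
      U * diagonal (fun i => Real.exp (-(t * lam i))) * star U := by
    intro t
    have h1 : -(t • P) = U * (-(t • diagonal lam)) * U⁻¹ := by
      rw [hUinv, hspec]
      simp only [mul_neg, neg_mul, mul_smul_comm, smul_mul_assoc, Matrix.mul_assoc]
    have h2 : -(t • diagonal lam) = diagonal (fun i => -(t * lam i)) := by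
      rw [← Matrix.diagonal_smul, ← Matrix.diagonal_neg]; rfl
    have hUunit : IsUnit U := ⟨⟨U, star U, hUstar', hUstar⟩, rfl⟩
    rw [h1, Matrix.exp_conj U _ hUunit, hUinv, h2,
      Matrix.exp_diagonal, Pi.exp_def]
    congr 1
    · congr 1; funext i; simp [← Real.exp_eq_exp_ℝ]
  have hdiagsum : ∀ (w : Fin d → ℝ),
      diagonal w = ∑ i, w i • diagonal (Pi.single i 1) := by
    intro w
    ext i j
    simp only [Matrix.sum_apply, Matrix.smul_apply, Matrix.diagonal_apply, Pi.single_apply,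
      smul_eq_mul]
    by_cases h : i = j
    · subst h; simp
    · simp [h]
  -- pointwise decomposition
  have key : (fun t : ℝ => (Real.sqrt t)⁻¹ • NormedSpace.exp (-(t • P)))
      = fun t => ∑ i, ((Real.sqrt t)⁻¹ * Real.exp (-(t * lam i))) • E i := by
    funext t
    rw [hexp t, hdiagsum]
    simp only [Finset.mul_sum, Finset.sum_mul, mul_smul_comm, smul_mul_assoc,
      Finset.smul_sum, smul_smul, hE]
  -- scalar integrability and values
  have hIi : ∀ i, IntegrableOn
      (fun t : ℝ => (Real.sqrt t)⁻¹ * Real.exp (-(t * lam i))) (Set.Ioi 0) volume := by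
    intro i
    have h := integrableOn_rpow_mul_exp_neg_mul_rpow (p := 1) (s := -(1/2)) (b := lam i)
      (by norm_num) one_pos (hlam i)
    refine h.congr_fun (fun t ht => ?_) measurableSet_Ioi
    dsimp only
    rw [Real.rpow_one, Real.rpow_neg (le_of_lt ht), ← Real.sqrt_eq_rpow, mul_comm t (lam i),
      neg_mul]
  have hVi : ∀ i, ∫ t in Set.Ioi (0:ℝ), (Real.sqrt t)⁻¹ * Real.exp (-(t * lam i)) =
      Real.sqrt Real.pi * Real.sqrt (lam i)⁻¹ := by
    intro i
    have h := integral_rpow_mul_exp_neg_mul_rpow (p := 1) (q := -(1/2)) (b := lam i)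
      one_pos (by norm_num) (hlam i)
    rw [show ∫ t in Set.Ioi (0:ℝ), (Real.sqrt t)⁻¹ * Real.exp (-(t * lam i)) =
        ∫ x in Set.Ioi (0:ℝ), x ^ (-(1/2:ℝ)) * Real.exp (-(lam i) * x ^ (1:ℝ)) from
      setIntegral_congr_fun measurableSet_Ioi (fun t ht => by
        rw [Real.rpow_one, Real.rpow_neg (le_of_lt ht), ← Real.sqrt_eq_rpow,
          mul_comm t (lam i), neg_mul]), h]
    norm_num
    rw [Real.Gamma_one_half_eq, Real.rpow_neg (hlam i).le, ← Real.sqrt_eq_rpow, ← Real.sqrt_inv]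
    ring
  have hInt : ∀ i, IntegrableOn
      (fun t : ℝ => ((Real.sqrt t)⁻¹ * Real.exp (-(t * lam i))) • E i) (Set.Ioi 0) volume :=
    fun i => (hIi i).smul_const (E i)
  have hsum : IntegrableOn
      (fun t : ℝ => ∑ i, ((Real.sqrt t)⁻¹ * Real.exp (-(t * lam i))) • E i)
      (Set.Ioi 0) volume := integrable_finset_sum _ (fun i _ => hInt i)
  constructor
  · rw [key]; exact hsum
  -- the integral computation
  rw [key, integral_finset_sum _ (fun i _ => hInt i)]
  have : ∀ i, (∫ t in Set.Ioi (0:ℝ), ((Real.sqrt t)⁻¹ * Real.exp (-(t * lam i))) • E i)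
      = (Real.sqrt Real.pi * Real.sqrt (lam i)⁻¹) • E i := by
    intro i
    rw [integral_smul_const, hVi i]
  rw [Finset.sum_congr rfl (fun i _ => this i)]
  -- identify with the sqrt
  set w : Fin d → ℝ := fun i => Real.sqrt (lam i)⁻¹ with hw
  have hsumS : ∑ i, (Real.sqrt Real.pi * w i) • E i =
      Real.sqrt Real.pi • (U * diagonal w * star U) := by
    rw [hdiagsum w]
    simp only [Finset.mul_sum, Finset.sum_mul, mul_smul_comm, smul_mul_assoc,
      Finset.smul_sum, smul_smul, hE]
  rw [hsumS]
  congr 1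
  -- S = sqrt of P⁻¹
  have hSpsd : (U * diagonal w * star U).PosSemidef := by
    rw [Matrix.star_eq_conjTranspose]
    exact Matrix.PosSemidef.mul_mul_conjTranspose_same
      (Matrix.posSemidef_diagonal_iff.mpr fun i => Real.sqrt_nonneg _) U
  have hconj_mul : ∀ A B : Matrix (Fin d) (Fin d) ℝ,
      (U * A * star U) * (U * B * star U) = U * (A * B) * star U := by
    intro A B
    simp only [Matrix.mul_assoc]
    rw [show star U * (U * (B * star U)) = B * star U by
      rw [← Matrix.mul_assoc, hUstar, Matrix.one_mul]]
  have hS2 : (U * diagonal w * star U) ^ 2 = P⁻¹ := by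
    symm
    apply Matrix.inv_eq_right_inv
    rw [pow_two, hconj_mul, hspec, hconj_mul]
    rw [show diagonal w * diagonal w = diagonal (fun i => (lam i)⁻¹) by
      rw [Matrix.diagonal_mul_diagonal,
        show (fun i => w i * w i) = fun i => (lam i)⁻¹ from
          funext fun i => Real.mul_self_sqrt (inv_nonneg.mpr (hlam i).le)]]
    rw [Matrix.diagonal_mul_diagonal]
    rw [show (fun i => lam i * (lam i)⁻¹) = fun _ => (1:ℝ) by
      funext i; exact mul_inv_cancel₀ (hlam i).ne']
    rw [Matrix.diagonal_one, Matrix.mul_one, hUstar']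
  exact psdSqrt_unique_aux hP.inv.posSemidef hSpsd (by rw [← pow_two]; exact hS2) |>.symm
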